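/- Fix an integer k ≥ 2 and let C_k(X) ∈ ℚ⟦X⟧ be the unique formal power series with constant term 1 satisfying C_k = 1 + X·C_k^k. Then the power series F(X) defined coefficientwise by [Xⁿ]F = ∑_{p=0}^{⌊n/(k−1)⌋} (1/(kp+1))·C(kp+1, p)·C(n+p, n−(k−1)p) satisfies the functional equation F·(1 − X^{k−1}·F^{k−1}) = 1 + X·F. -/

import Mathlib

open Finset

open PowerSeries

lemma coeff_X_mul_deriv (S : PowerSeries ℚ) (p : ℕ) :
    PowerSeries.coeff p (PowerSeries.X * d⁄dX ℚ S) = (p : ℚ) * PowerSeries.coeff p S := by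
  cases p with
  | zero => simp
  | succ n => rw [coeff_succ_X_mul, coeff_derivative]; push_cast; ring

lemma fuss_closed (m : ℕ) (A : PowerSeries ℚ) (hC0 : PowerSeries.constantCoeff A = 1)
    (hCk : A = 1 + PowerSeries.X * A ^ (m+2)) (p : ℕ) :
    PowerSeries.coeff p A * (p.factorial * ((m+1)*p+1).factorial) = (((m+2)*p).factorial : ℚ) := by
  have h1 : (PowerSeries.X : PowerSeries ℚ) * A ^ (m+2) = A - 1 := by linear_combination -hCk
  set B := d⁄dX ℚ A with hB
  have e2 : B = A^(m+2) + ((m:PowerSeries ℚ)+2) * PowerSeries.X * (A^(m+1) * B) := by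
    have h := congrArg (d⁄dX ℚ) hCk
    rw [map_add, Derivation.leibniz, Derivation.leibniz_pow, Derivation.map_one_eq_zero] at h
    simp only [derivative_X, smul_eq_mul, nsmul_eq_mul, smul_smul,
      show m + 2 - 1 = m + 1 by omega, mul_one, zero_add] at h
    rw [← hB] at h
    push_cast at h ⊢
    linear_combination h
  have base : ((m:PowerSeries ℚ)+1) * (PowerSeries.X * A * B)
      = ((m:PowerSeries ℚ)+2) * (PowerSeries.X * B) - (A^2 - A) := by
    linear_combination (-(PowerSeries.X*A)) * e2 + (-A - ((m:PowerSeries ℚ)+2)*PowerSeries.X*B) * h1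
  have epow : ∀ s : ℕ, d⁄dX ℚ (A^(s+1)) = ((s:PowerSeries ℚ)+1) * (A^s * B) := by
    intro s
    rw [Derivation.leibniz_pow]
    simp only [show s + 1 - 1 = s by omega, smul_eq_mul, nsmul_eq_mul, ← hB]
    push_cast; ring
  have ratio : ∀ s p : ℕ,
      ((m:ℚ)+1)*((s:ℚ)+1) * ((p:ℚ) * PowerSeries.coeff p (A^(s+2)))
      = ((m:ℚ)+2)*((s:ℚ)+2) * ((p:ℚ) * PowerSeries.coeff p (A^(s+1)))
        - ((s:ℚ)+1)*((s:ℚ)+2) * (PowerSeries.coeff p (A^(s+2)) - PowerSeries.coeff p (A^(s+1))) := by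
    intro s p
    have I : (PowerSeries.C (((m:ℚ)+1)*((s:ℚ)+1))) * (PowerSeries.X * d⁄dX ℚ (A^(s+2)))
        = PowerSeries.C (((m:ℚ)+2)*((s:ℚ)+2)) * (PowerSeries.X * d⁄dX ℚ (A^(s+1)))
          - PowerSeries.C (((s:ℚ)+1)*((s:ℚ)+2)) * (A^(s+2) - A^(s+1)) := by
      have e1 := epow (s+1)
      have e2' := epow s
      push_cast at e1
      rw [show s+1+1 = s+2 by omega] at e1
      rw [e1, e2']
      simp only [map_mul, map_add, map_one, map_natCast, map_ofNat]
      push_cast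
      linear_combination (((s:PowerSeries ℚ)+1)*((s:PowerSeries ℚ)+2)*A^s) * base
    have hc := congrArg (PowerSeries.coeff p) I
    simp only [map_sub, PowerSeries.coeff_C_mul, coeff_X_mul_deriv] at hc
    linear_combination hc
  -- closed form for coefficients of powers
  have Pow : ∀ s p : ℕ,
      ((((m+2)*p).factorial : ℚ) * (((m+1)*p + s + 1).factorial : ℚ)) * PowerSeries.coeff p (A^(s+1))
      = ((s:ℚ)+1) * (((m+2)*p + s).factorial : ℚ) * (((m+1)*p + 1).factorial : ℚ) * PowerSeries.coeff p A := by
    intro s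
    induction s with
    | zero =>
      intro p
      simp only [pow_one, Nat.add_zero, Nat.cast_zero]
      ring
    | succ s ih =>
      intro p
      have rr : ((s:ℚ)+1)*(((m:ℚ)+1)*p+s+2) * PowerSeries.coeff p (A^(s+2))
          = ((s:ℚ)+2)*(((m:ℚ)+2)*p+s+1) * PowerSeries.coeff p (A^(s+1)) := by
        linear_combination ratio s p
      have hf1 : (((m+1)*p + (s+1) + 1).factorial : ℚ)
          = (((m:ℚ)+1)*p+s+2) * (((m+1)*p + s + 1).factorial : ℚ) := by
        rw [show (m+1)*p + (s+1) + 1 = ((m+1)*p + s + 1) + 1 by omega, Nat.factorial_succ]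
        push_cast; ring
      have hf2 : (((m+2)*p + (s+1)).factorial : ℚ)
          = (((m:ℚ)+2)*p+s+1) * (((m+2)*p + s).factorial : ℚ) := by
        rw [show (m+2)*p + (s+1) = ((m+2)*p + s) + 1 by omega, Nat.factorial_succ]
        push_cast; ring
      have h0 : ((s:ℚ)+1)*(((m:ℚ)+1)*p+s+2) ≠ 0 := by positivity
      apply mul_left_cancel₀ h0
      rw [hf1, hf2]
      push_cast
      linear_combination ((((m+2)*p).factorial:ℚ)*(((m:ℚ)+1)*↑p+↑s+2)*((((m+1)*p+s+1).factorial:ℚ))) * rr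
        + (((s:ℚ)+2)*(((m:ℚ)+2)*↑p+↑s+1)*(((m:ℚ)+1)*↑p+↑s+2)) * ih p
  -- induction on p
  induction p with
  | zero => simp [PowerSeries.coeff_zero_eq_constantCoeff, hC0]
  | succ p ih =>
    have hc1 : PowerSeries.coeff (p+1) A = PowerSeries.coeff p (A^(m+2)) := by
      nth_rewrite 1 [hCk]
      rw [map_add, coeff_succ_X_mul]
      simp [PowerSeries.coeff_one]
    have hP := Pow (m+1) p
    rw [show m+1+1 = m+2 by omega] at hP
    have hf3 : (((m+2)*(p+1)).factorial : ℚ)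
        = (((m:ℚ)+2)*p+m+2) * (((m+2)*p + (m+1)).factorial : ℚ) := by
      rw [show (m+2)*(p+1) = ((m+2)*p + (m+1)) + 1 by ring, Nat.factorial_succ]
      push_cast; ring
    have hf4 : (((m+1)*(p+1)+1).factorial : ℚ) = (((m+1)*p + (m+1) + 1).factorial : ℚ) := by
      rw [show (m+1)*(p+1)+1 = (m+1)*p + (m+1) + 1 by ring]
    have hf5 : ((p+1).factorial : ℚ) = ((p:ℚ)+1) * (p.factorial : ℚ) := by
      rw [Nat.factorial_succ]; push_cast; ring
    have h0 : ((((m+2)*p).factorial : ℚ)) * (((m+1)*p + (m+1) + 1).factorial : ℚ) ≠ 0 := by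
      have := Nat.factorial_ne_zero ((m+2)*p)
      have := Nat.factorial_ne_zero ((m+1)*p + (m+1) + 1)
      positivity
    apply mul_left_cancel₀ h0
    rw [hc1, hf3, hf4, hf5]
    push_cast
    push_cast at hP ih
    linear_combination (((p:ℚ)+1) * (p.factorial : ℚ) * ((((m+1)*p + (m+1) + 1)).factorial : ℚ)) * hP
      + (((m:ℚ)+2)*(↑p+1)*((((m+1)*p+(m+1)+1).factorial : ℚ))*((((m+2)*p+(m+1)).factorial : ℚ))) * ih

lemma cform (m : ℕ) (A : PowerSeries ℚ) (hC0 : PowerSeries.constantCoeff A = 1)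
    (hCk : A = 1 + PowerSeries.X * A ^ (m+2)) (p : ℕ) :
    PowerSeries.coeff p A
      = 1/(((m:ℚ)+2)*p+1) * (Nat.choose ((m+2)*p+1) p : ℚ) := by
  have hmul : (m+2)*p = (m+1)*p + p := by ring
  have hle : p ≤ (m+2)*p + 1 := by omega
  have hch : (Nat.choose ((m+2)*p+1) p : ℚ)
      = (((m+2)*p+1).factorial : ℚ) / ((p.factorial : ℚ) * (((m+1)*p+1).factorial : ℚ)) := by
    rw [Nat.cast_choose ℚ hle, show (m+2)*p+1-p = (m+1)*p+1 by omega]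
  have hfs : (((m+2)*p+1).factorial : ℚ) = (((m:ℚ)+2)*p+1) * (((m+2)*p).factorial : ℚ) := by
    rw [Nat.factorial_succ]; push_cast; ring
  have hA := fuss_closed m A hC0 hCk p
  have h1 : (p.factorial : ℚ) ≠ 0 := by exact_mod_cast Nat.factorial_ne_zero p
  have h2 : ((((m+1)*p+1).factorial) : ℚ) ≠ 0 := by exact_mod_cast Nat.factorial_ne_zero _
  have h3 : (((m:ℚ)+2)*p+1) ≠ 0 := by positivity
  rw [hch, hfs]
  field_simp
  linear_combination hA


/-- Section 3 of the paper: for `k ≥ 2`, the power series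
`F(X) = (1/(1−X))·C_k(X^{k−1}/(1−X)^k)`, whose coefficients are
`[Xⁿ]F = ∑_{p=0}^{⌊n/(k−1)⌋} (1/(kp+1))·C(kp+1,p)·C(n+p,n−(k−1)p)`,
satisfies the functional equation `F·(1 − X^{k−1}·F^{k−1}) = 1 + X·F`. -/
theorem gf_substitution_functional_equation (k : ℕ) (hk : 2 ≤ k)
    (Ck : PowerSeries ℚ) (hC0 : PowerSeries.constantCoeff Ck = 1)
    (hCk : Ck = 1 + PowerSeries.X * Ck ^ k)
    (F : PowerSeries ℚ)
    (hF : ∀ n : ℕ, PowerSeries.coeff n F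
      = ∑ p ∈ Finset.range (n / (k - 1) + 1),
          ((1 : ℚ) / (k * p + 1)) * (Nat.choose (k * p + 1) p) *
            (Nat.choose (n + p) (n - (k - 1) * p))) :
    F * (1 - PowerSeries.X ^ (k - 1) * F ^ (k - 1)) = 1 + PowerSeries.X * F := by
  obtain ⟨m, rfl⟩ : ∃ m, k = m + 2 := ⟨k - 2, by omega⟩
  simp only [show m + 2 - 1 = m + 1 by omega] at hF ⊢
  set c : ℕ → ℚ := fun p => PowerSeries.coeff p Ck with hc
  have hF' : ∀ n : ℕ, PowerSeries.coeff n F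
      = ∑ p ∈ Finset.range (n / (m+1) + 1), c p * (Nat.choose (n + p) (n - (m+1) * p) : ℚ) := by
    intro n
    rw [hF n]
    refine Finset.sum_congr rfl fun p hp => ?_
    show _ = PowerSeries.coeff p Ck * _
    rw [cform m Ck hC0 hCk p]
    push_cast
    ring
  -- the substitution machinery
  set wv : PowerSeries ℚ := ((PowerSeries.invOneSubPow ℚ 1 : (PowerSeries ℚ)ˣ) : PowerSeries ℚ) with hwv
  have hw : wv * (1 - PowerSeries.X) = 1 := by
    have h := (PowerSeries.invOneSubPow ℚ 1).val_inv
    rwa [PowerSeries.invOneSubPow_inv_eq_one_sub_pow, pow_one] at h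
  have hwpow : ∀ j : ℕ, wv ^ (j+1) = ((PowerSeries.invOneSubPow ℚ (j+1) : (PowerSeries ℚ)ˣ) : PowerSeries ℚ) := by
    intro j
    have ha : wv ^ (j+1) * (1 - PowerSeries.X) ^ (j+1) = 1 := by
      rw [← mul_pow, hw, one_pow]
    have hb : ((PowerSeries.invOneSubPow ℚ (j+1) : (PowerSeries ℚ)ˣ) : PowerSeries ℚ)
        * (1 - PowerSeries.X) ^ (j+1) = 1 := by
      have h := (PowerSeries.invOneSubPow ℚ (j+1)).val_inv
      rwa [PowerSeries.invOneSubPow_inv_eq_one_sub_pow] at h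
    calc wv ^ (j+1)
        = wv ^ (j+1) * (((PowerSeries.invOneSubPow ℚ (j+1) : (PowerSeries ℚ)ˣ) : PowerSeries ℚ)
            * (1 - PowerSeries.X) ^ (j+1)) := by rw [hb, mul_one]
      _ = (wv ^ (j+1) * (1 - PowerSeries.X) ^ (j+1))
            * ((PowerSeries.invOneSubPow ℚ (j+1) : (PowerSeries ℚ)ˣ) : PowerSeries ℚ) := by ring
      _ = _ := by rw [ha, one_mul]
  have hcw : ∀ j i : ℕ, PowerSeries.coeff i (wv ^ (j+1)) = (Nat.choose (j+i) j : ℚ) := by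
    intro j i
    rw [hwpow j, PowerSeries.invOneSubPow_val_succ_eq_mk_add_choose, PowerSeries.coeff_mk]
  have termcoeff : ∀ p j : ℕ,
      PowerSeries.coeff j (PowerSeries.X ^ ((m+1)*p) * wv ^ ((m+2)*p+1))
      = if (m+1)*p ≤ j then (Nat.choose (j+p) (j-(m+1)*p) : ℚ) else 0 := by
    intro p j
    rw [PowerSeries.coeff_X_pow_mul']
    split_ifs with h
    · rw [hcw]
      have hmul : (m+2)*p = (m+1)*p + p := by ring
      have e1 : (m+2)*p + (j - (m+1)*p) = j + p := by omega
      have e2 : (m+2)*p ≤ j + p := by omega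
      rw [e1]
      have := Nat.choose_symm e2
      rw [show j + p - (m+2)*p = j - (m+1)*p by omega] at this
      rw [← this]
    · rfl
  set v : PowerSeries ℚ := PowerSeries.X ^ (m+1) * wv ^ (m+2) with hv
  set P : ℕ → Polynomial ℚ := fun N => ∑ p ∈ Finset.range N, Polynomial.C (c p) * Polynomial.X ^ p with hP
  set H : ℕ → PowerSeries ℚ := fun N => wv * Polynomial.aeval v (P N) with hH
  have hEsum : ∀ N, Polynomial.aeval v (P N) = ∑ p ∈ Finset.range N, PowerSeries.C (c p) * v ^ p := by
    intro N
    rw [hP, map_sum]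
    refine Finset.sum_congr rfl fun p _ => ?_
    rw [map_mul, map_pow, Polynomial.aeval_C, Polynomial.aeval_X, PowerSeries.C_eq_algebraMap]
  have hHsum : ∀ N, H N = ∑ p ∈ Finset.range N,
      PowerSeries.C (c p) * (PowerSeries.X ^ ((m+1)*p) * wv ^ ((m+2)*p+1)) := by
    intro N
    simp only [hH]
    rw [hEsum, Finset.mul_sum]
    refine Finset.sum_congr rfl fun p _ => ?_
    have hvp : v ^ p = PowerSeries.X ^ ((m+1)*p) * wv ^ ((m+2)*p) := by
      rw [hv, mul_pow, ← pow_mul, ← pow_mul]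
    rw [hvp, pow_succ]
    ring
  have hcoeffH : ∀ N j : ℕ, j < (m+1)*N → PowerSeries.coeff j (H N) = PowerSeries.coeff j F := by
    intro N j hj
    rw [hHsum, map_sum, hF' j]
    have step1 : ∀ p ∈ Finset.range N,
        PowerSeries.coeff j (PowerSeries.C (c p) * (PowerSeries.X ^ ((m+1)*p) * wv ^ ((m+2)*p+1)))
        = c p * (if (m+1)*p ≤ j then (Nat.choose (j+p) (j-(m+1)*p) : ℚ) else 0) := by
      intro p _
      rw [PowerSeries.coeff_C_mul, termcoeff]
    rw [Finset.sum_congr rfl step1]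
    have hsub : Finset.range (j/(m+1)+1) ⊆ Finset.range N := by
      intro x hx
      rw [Finset.mem_range] at hx ⊢
      have hcm : (m+1)*N = N*(m+1) := Nat.mul_comm _ _
      have hdiv : j / (m+1) < N := (Nat.div_lt_iff_lt_mul (by omega : 0 < m+1)).2 (by omega)
      omega
    rw [← Finset.sum_subset hsub ?hvanish]
    · refine Finset.sum_congr rfl fun p hp => ?_
      rw [Finset.mem_range] at hp
      have hle : (m+1)*p ≤ j := by
        have h2 := (Nat.le_div_iff_mul_le (by omega : 0 < m+1)).1 (by omega : p ≤ j/(m+1))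
        have hcm : (m+1)*p = p*(m+1) := Nat.mul_comm _ _
        omega
      rw [if_pos hle]
    · intro p hpN hps
      rw [Finset.mem_range] at hpN hps
      push_neg at hps
      have hgt : ¬ ((m+1)*p ≤ j) := by
        intro hle
        have hcm : (m+1)*p = p*(m+1) := Nat.mul_comm _ _
        have h2 := (Nat.le_div_iff_mul_le (by omega : 0 < m+1)).2 (by omega : p * (m+1) ≤ j)
        omega
      rw [if_neg hgt, mul_zero]
  have key : ∀ n : ℕ, PowerSeries.coeff n
      (F - PowerSeries.X^(m+1) * F^(m+2) - 1 - PowerSeries.X * F) = 0 := by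
    intro n
    set N := n + 1 with hN
    have hNle : n + 1 ≤ (m+1)*N := by
      have := Nat.le_mul_of_pos_left N (show 0 < m+1 by omega)
      omega
    have d1 : (PowerSeries.X : PowerSeries ℚ)^(n+1) ∣ F - H N := by
      rw [PowerSeries.X_pow_dvd_iff]
      intro i hi
      rw [map_sub, hcoeffH N i (by omega)]
      exact sub_self _
    have hPser : ∀ i, i < N → PowerSeries.coeff i ((P N : Polynomial ℚ) : PowerSeries ℚ) = c i := by
      intro i hi
      rw [Polynomial.coeff_coe, hP]
      simp only [Polynomial.finset_sum_coeff, Polynomial.coeff_C_mul, Polynomial.coeff_X_pow]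
      rw [Finset.sum_eq_single i]
      · simp
      · intro b _ hbi
        rw [if_neg (fun h => hbi h.symm), mul_zero]
      · intro hnotmem
        exact absurd (Finset.mem_range.2 hi) hnotmem
    have hdvdPC : (PowerSeries.X : PowerSeries ℚ)^N ∣ ((P N : Polynomial ℚ) : PowerSeries ℚ) - Ck := by
      rw [PowerSeries.X_pow_dvd_iff]
      intro i hi
      rw [map_sub, hPser i hi]
      exact sub_self _
    have hQdvd : Polynomial.X^N ∣ (P N - 1 - Polynomial.X * (P N)^(m+2)) := by
      rw [Polynomial.X_pow_dvd_iff]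
      intro d hd
      have hcoe : (((P N - 1 - Polynomial.X * (P N)^(m+2)) : Polynomial ℚ) : PowerSeries ℚ)
          = ((P N : Polynomial ℚ) : PowerSeries ℚ) - 1
            - PowerSeries.X * ((P N : Polynomial ℚ) : PowerSeries ℚ)^(m+2) := by
        push_cast
        ring
      have hser : (PowerSeries.X : PowerSeries ℚ)^N
          ∣ (((P N - 1 - Polynomial.X * (P N)^(m+2)) : Polynomial ℚ) : PowerSeries ℚ) := by
        rw [hcoe]
        have hkdvd : (PowerSeries.X : PowerSeries ℚ)^N
            ∣ ((P N : Polynomial ℚ) : PowerSeries ℚ)^(m+2) - Ck^(m+2) :=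
          dvd_trans hdvdPC (sub_dvd_pow_sub_pow _ _ _)
        have heq : ((P N : Polynomial ℚ) : PowerSeries ℚ) - 1
              - PowerSeries.X * ((P N : Polynomial ℚ) : PowerSeries ℚ)^(m+2)
            = (((P N : Polynomial ℚ) : PowerSeries ℚ) - Ck)
              - PowerSeries.X * (((P N : Polynomial ℚ) : PowerSeries ℚ)^(m+2) - Ck^(m+2)) := by
          linear_combination hCk
        rw [heq]
        exact dvd_sub hdvdPC (Dvd.dvd.mul_left hkdvd _)
      have h0 := PowerSeries.X_pow_dvd_iff.1 hser d hd
      rw [← Polynomial.coeff_coe]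
      exact h0
    obtain ⟨Q', hQ'⟩ := hQdvd
    have hE : Polynomial.aeval v (P N) - 1 - v * (Polynomial.aeval v (P N))^(m+2)
        = v^N * Polynomial.aeval v Q' := by
      have h := congrArg (Polynomial.aeval v) hQ'
      simp only [map_sub, map_mul, map_pow, map_one, Polynomial.aeval_X] at h
      linear_combination h
    have d3 : (PowerSeries.X : PowerSeries ℚ)^(n+1)
        ∣ H N - PowerSeries.X^(m+1) * (H N)^(m+2) - 1 - PowerSeries.X * (H N) := by
      have hid : H N - PowerSeries.X^(m+1) * (H N)^(m+2) - 1 - PowerSeries.X * (H N)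
          = v^N * Polynomial.aeval v Q' := by
        rw [← hE]
        simp only [hH]
        rw [hv]
        linear_combination (Polynomial.aeval (PowerSeries.X^(m+1)*wv^(m+2)) (P N)) * hw
      rw [hid]
      have hvdvd : (PowerSeries.X : PowerSeries ℚ)^(n+1) ∣ v^N := by
        rw [hv, mul_pow, ← pow_mul]
        exact Dvd.dvd.mul_right (pow_dvd_pow _ (by omega)) _
      exact hvdvd.mul_right _
    have d2 : (PowerSeries.X : PowerSeries ℚ)^(n+1) ∣ F^(m+2) - (H N)^(m+2) :=
      dvd_trans d1 (sub_dvd_pow_sub_pow _ _ _)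
    have dall : (PowerSeries.X : PowerSeries ℚ)^(n+1)
        ∣ F - PowerSeries.X^(m+1)*F^(m+2) - 1 - PowerSeries.X*F := by
      have e : F - PowerSeries.X^(m+1)*F^(m+2) - 1 - PowerSeries.X*F
          = ((F - H N) - PowerSeries.X^(m+1)*(F^(m+2) - (H N)^(m+2)) - PowerSeries.X*(F - H N))
            + (H N - PowerSeries.X^(m+1)*(H N)^(m+2) - 1 - PowerSeries.X*(H N)) := by ring
      rw [e]
      exact dvd_add (dvd_sub (dvd_sub d1 (Dvd.dvd.mul_left d2 _)) (Dvd.dvd.mul_left d1 _)) d3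
    exact PowerSeries.X_pow_dvd_iff.1 dall n (Nat.lt_succ_self n)
  have keyEq : F - PowerSeries.X^(m+1) * F^(m+2) - 1 - PowerSeries.X * F = 0 :=
    PowerSeries.ext fun n => by rw [key n, map_zero]
  linear_combination keyEq
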